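/- Let (G, G⁺) be a torsion-free partially ordered abelian group and let H₀ ≤ G be a maximally singular subgroup. Then H₀ satisfies property (2.2): for every integer k ≥ 1 and every x ∈ G, if k·x ∈ H₀ then x ∈ H₀. -/
import Mathlib

/-- Let (G, G⁺) be a torsion-free partially ordered abelian group and let
H₀ ≤ G be a maximally singular subgroup. Then H₀ satisfies property (2.2): for every
integer k ≥ 1 and every x ∈ G, if k·x ∈ H₀ then x ∈ H₀. -/
theorem stmt_0 {G : Type*} [AddCommGroup G]
    (Gpos : Set G)
    (hzero : (0 : G) ∈ Gpos)
    (hadd : ∀ a ∈ Gpos, ∀ b ∈ Gpos, a + b ∈ Gpos)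
    (hpointed : ∀ a : G, a ∈ Gpos → -a ∈ Gpos → a = 0)
    (htf : ∀ n : ℕ, 1 ≤ n → ∀ x : G, n • x = 0 → x = 0)
    (H₀ : AddSubgroup G)
    (hsing : ∀ a ∈ H₀, a ∈ Gpos → a = 0)
    (hmax : ∀ H : AddSubgroup G, (∀ a ∈ H, a ∈ Gpos → a = 0) → H₀ ≤ H → H = H₀) :
    ∀ k : ℤ, 1 ≤ k → ∀ x : G, k • x ∈ H₀ → x ∈ H₀ := by
  intro k hk x hkx
  have hnsmul : ∀ (m : ℕ) (a : G), a ∈ Gpos → m • a ∈ Gpos := by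
    intro m a ha
    induction m with
    | zero => simpa using hzero
    | succ n ih => rw [succ_nsmul]; exact hadd _ ih _ ha
  set H : AddSubgroup G := H₀ ⊔ AddSubgroup.zmultiples x with hH
  have hHsing : ∀ a ∈ H, a ∈ Gpos → a = 0 := by
    intro a haH hapos
    rw [hH, AddSubgroup.mem_sup] at haH
    obtain ⟨h, hh, z, hz, rfl⟩ := haH
    obtain ⟨n, rfl⟩ := AddSubgroup.mem_zmultiples_iff.mp hz
    have hkmem : k • (h + n • x) ∈ H₀ := by
      rw [smul_add]
      exact H₀.add_mem (H₀.zsmul_mem hh k) (by rw [smul_comm]; exact H₀.zsmul_mem hkx n)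
    have hkpos : k • (h + n • x) ∈ Gpos := by
      have : k.toNat • (h + n • x) ∈ Gpos := hnsmul _ _ hapos
      rwa [← Int.toNat_of_nonneg (by omega : (0:ℤ) ≤ k), natCast_zsmul]
    have := hsing _ hkmem hkpos
    have hk1 : 1 ≤ k.toNat := by omega
    refine htf k.toNat hk1 _ ?_
    rw [← natCast_zsmul, Int.toNat_of_nonneg (by omega : (0:ℤ) ≤ k)]
    exact this
  have hHeq : H = H₀ := hmax H hHsing le_sup_left
  have : x ∈ H := AddSubgroup.mem_sup_right (AddSubgroup.mem_zmultiples x)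
  rwa [hHeq] at this
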